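/- If a, b, c are odd integers with gcd(a,b,c) = 1, then gcd((a² + b²)/2, (b² + c²)/2, (a² + c²)/2) = 1. -/

import Mathlib

/-- If `a, b, c` are odd integers with `gcd(a,b,c) = 1`, then
`gcd((a² + b²)/2, (b² + c²)/2, (a² + c²)/2) = 1`. -/
theorem gcd_half_sums_eq_one (a b c : ℤ) (ha : Odd a) (hb : Odd b) (hc : Odd c)
    (hgcd : Int.gcd (Int.gcd a b) c = 1) :
    Int.gcd (Int.gcd ((a ^ 2 + b ^ 2) / 2) ((b ^ 2 + c ^ 2) / 2)) ((a ^ 2 + c ^ 2) / 2) = 1 := by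
  obtain ⟨a', rfl⟩ := ha
  obtain ⟨b', rfl⟩ := hb
  obtain ⟨c', rfl⟩ := hc
  set A : ℤ := 2 * a' + 1
  set B : ℤ := 2 * b' + 1
  set C : ℤ := 2 * c' + 1
  have hx : (A ^ 2 + B ^ 2) / 2 = 2 * a' ^ 2 + 2 * a' + 2 * b' ^ 2 + 2 * b' + 1 := by
    simp only [A, B]; ring_nf; omega
  have hy : (B ^ 2 + C ^ 2) / 2 = 2 * b' ^ 2 + 2 * b' + 2 * c' ^ 2 + 2 * c' + 1 := by
    simp only [B, C]; ring_nf; omega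
  have hz : (A ^ 2 + C ^ 2) / 2 = 2 * a' ^ 2 + 2 * a' + 2 * c' ^ 2 + 2 * c' + 1 := by
    simp only [A, C]; ring_nf; omega
  set x := (A ^ 2 + B ^ 2) / 2
  set y := (B ^ 2 + C ^ 2) / 2
  set z := (A ^ 2 + C ^ 2) / 2
  have hA : A ^ 2 = x + z - y := by rw [hx, hy, hz]; ring
  have hB : B ^ 2 = x + y - z := by rw [hx, hy, hz]; ring
  have hC : C ^ 2 = y + z - x := by rw [hx, hy, hz]; ring
  set g := Int.gcd (Int.gcd x y) z with hg
  have hgx : (g : ℤ) ∣ x := dvd_trans (Int.gcd_dvd_left _ _) (Int.gcd_dvd_left _ _)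
  have hgy : (g : ℤ) ∣ y := dvd_trans (Int.gcd_dvd_left _ _) (Int.gcd_dvd_right _ _)
  have hgz : (g : ℤ) ∣ z := Int.gcd_dvd_right _ _
  rw [Nat.eq_one_iff_not_exists_prime_dvd]
  intro p hp hpg
  have hpA : (p : ℤ) ∣ A := (Int.prime_iff_natAbs_prime.mpr (by simpa using hp)).dvd_of_dvd_pow
    (hA ▸ dvd_sub (dvd_add (dvd_trans (Int.natCast_dvd_natCast.mpr hpg) hgx)
      (dvd_trans (Int.natCast_dvd_natCast.mpr hpg) hgz))
      (dvd_trans (Int.natCast_dvd_natCast.mpr hpg) hgy))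
  have hpB : (p : ℤ) ∣ B := (Int.prime_iff_natAbs_prime.mpr (by simpa using hp)).dvd_of_dvd_pow
    (hB ▸ dvd_sub (dvd_add (dvd_trans (Int.natCast_dvd_natCast.mpr hpg) hgx)
      (dvd_trans (Int.natCast_dvd_natCast.mpr hpg) hgy))
      (dvd_trans (Int.natCast_dvd_natCast.mpr hpg) hgz))
  have hpC : (p : ℤ) ∣ C := (Int.prime_iff_natAbs_prime.mpr (by simpa using hp)).dvd_of_dvd_pow
    (hC ▸ dvd_sub (dvd_add (dvd_trans (Int.natCast_dvd_natCast.mpr hpg) hgy)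
      (dvd_trans (Int.natCast_dvd_natCast.mpr hpg) hgz))
      (dvd_trans (Int.natCast_dvd_natCast.mpr hpg) hgx))
  have : (p : ℤ) ∣ (Int.gcd (Int.gcd A B) C : ℤ) :=
    Int.dvd_coe_gcd (Int.dvd_coe_gcd hpA hpB) hpC
  rw [hgcd] at this
  exact hp.ne_one (Nat.eq_one_of_dvd_one (Int.ofNat_dvd.mp (by exact_mod_cast this)))
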